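/- Let u : (0,∞) × ℝ³ → ℝ be C², and suppose |t − r| ≥ 1 and r ≤ 2t, where r = |x|. Then ⟨t−r⟩ |∂_i ∂_t u| ≲ |∂Γ^{≤1}u| + ⟨t+r⟩|□u| for each i = 1,2,3, using the identity ∂_i∂_t u = t^{-1} ∂_t Ω_{i0}u − t^{-1}∂_i u − (x_i/t) ∂_{tt}u together with the bound ⟨t−r⟩|∂_{tt}u| ≲ ⟨t+r⟩|□u| + |∂Γ^{≤1}u|. -/

import Mathlib

open Real MeasureTheory

/-- Partial derivative in the `j`-th space-time coordinate (`0` = time, `1,2,3` = space). -/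
noncomputable def pd (j : Fin 4) (U : (Fin 4 → ℝ) → ℝ) : (Fin 4 → ℝ) → ℝ :=
  fun z => fderiv ℝ U z (Pi.single j 1)

/-- Spatial Laplacian. -/
noncomputable def lap (U : (Fin 4 → ℝ) → ℝ) : (Fin 4 → ℝ) → ℝ :=
  fun z => ∑ i : Fin 3, pd i.succ (pd i.succ U) z

/-- The d'Alembertian `□ = ∂_tt − Δ`. -/
noncomputable def box (U : (Fin 4 → ℝ) → ℝ) : (Fin 4 → ℝ) → ℝ :=
  fun z => pd 0 (pd 0 U) z - lap U z

/-- The spatial radius `r = |x|`. -/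
noncomputable def rad (z : Fin 4 → ℝ) : ℝ := Real.sqrt (∑ i : Fin 3, (z i.succ)^2)

/-- Lorentz boost `Ω_{i0} = t∂_i + x_i ∂_t`. -/
noncomputable def boost (i : Fin 3) (U : (Fin 4 → ℝ) → ℝ) : (Fin 4 → ℝ) → ℝ :=
  fun z => z 0 * pd i.succ U z + z i.succ * pd 0 U z

/-- Rotation `Ω_{ij} = x_i∂_j − x_j∂_i`. -/
noncomputable def rot (i j : Fin 3) (U : (Fin 4 → ℝ) → ℝ) : (Fin 4 → ℝ) → ℝ :=
  fun z => z i.succ * pd j.succ U z - z j.succ * pd i.succ U z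

/-- Radial derivative `∂_r = (x/r)·∇`. -/
noncomputable def dr (U : (Fin 4 → ℝ) → ℝ) : (Fin 4 → ℝ) → ℝ :=
  fun z => ∑ i : Fin 3, (z i.succ / rad z) * pd i.succ U z

/-- Japanese bracket `⟨s⟩ = √(1+s²)`. -/
noncomputable def jb (s : ℝ) : ℝ := Real.sqrt (1 + s^2)

/-- The eleven operators `Γ^{≤1}`: identity, `∂_t`, `∂_i`, boosts, rotations. -/
noncomputable def gam : Fin 11 → ((Fin 4 → ℝ) → ℝ) → ((Fin 4 → ℝ) → ℝ) :=
  ![id, pd 0, pd 1, pd 2, pd 3, boost 0, boost 1, boost 2, rot 0 1, rot 0 2, rot 1 2]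

/-- `|∂Γ^{≤1}u|`: the ℓ² norm of all space-time first derivatives of all `Γ^{≤1}u`. -/
noncomputable def dGam (U : (Fin 4 → ℝ) → ℝ) (z : Fin 4 → ℝ) : ℝ :=
  Real.sqrt (∑ a : Fin 4, ∑ k : Fin 11, (pd a (gam k U) z)^2)

section Aux

variable {U : (Fin 4 → ℝ) → ℝ} {z : Fin 4 → ℝ}

lemma hasFDerivAt_pd (hU : ContDiffAt ℝ 2 U z) (b : Fin 4) :
    HasFDerivAt (pd b U)
      ((ContinuousLinearMap.apply ℝ ℝ (Pi.single b 1 : Fin 4 → ℝ)).comp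
        (fderiv ℝ (fderiv ℝ U) z)) z := by
  have h1 : ContDiffAt ℝ 1 (fderiv ℝ U) z := hU.fderiv_right (by norm_num)
  have h2 : HasFDerivAt (fderiv ℝ U) (fderiv ℝ (fderiv ℝ U) z) z :=
    (h1.differentiableAt one_ne_zero).hasFDerivAt
  exact (ContinuousLinearMap.apply ℝ ℝ (Pi.single b 1 : Fin 4 → ℝ)).hasFDerivAt.comp z h2

lemma pd_pd (hU : ContDiffAt ℝ 2 U z) (a b : Fin 4) :
    pd a (pd b U) z = fderiv ℝ (fderiv ℝ U) z (Pi.single a 1) (Pi.single b 1) := by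
  show fderiv ℝ (pd b U) z (Pi.single a 1) = _
  rw [(hasFDerivAt_pd hU b).fderiv]; rfl

lemma pd_comm (hU : ContDiffAt ℝ 2 U z) (a b : Fin 4) :
    pd a (pd b U) z = pd b (pd a U) z := by
  rw [pd_pd hU a b, pd_pd hU b a]
  exact hU.isSymmSndFDerivAt (by simp [minSmoothness_of_isRCLikeNormedField]) _ _

lemma pd_boost (hU : ContDiffAt ℝ 2 U z) (i : Fin 3) (a : Fin 4) :
    pd a (boost i U) z =
      (Pi.single a 1 : Fin 4 → ℝ) 0 * pd i.succ U z + z 0 * pd a (pd i.succ U) z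
      + (Pi.single a 1 : Fin 4 → ℝ) i.succ * pd 0 U z + z i.succ * pd a (pd 0 U) z := by
  have h0 : HasFDerivAt (fun y : Fin 4 → ℝ => y 0)
      (ContinuousLinearMap.proj (R := ℝ) (φ := fun _ : Fin 4 => ℝ) 0) z :=
    hasFDerivAt_apply 0 z
  have hi : HasFDerivAt (fun y : Fin 4 → ℝ => y i.succ)
      (ContinuousLinearMap.proj (R := ℝ) (φ := fun _ : Fin 4 => ℝ) i.succ) z :=
    hasFDerivAt_apply i.succ z
  have h1 := hasFDerivAt_pd hU i.succ
  have h2 := hasFDerivAt_pd hU 0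
  have hb : HasFDerivAt (boost i U) _ z := (h0.mul h1).add (hi.mul h2)
  show fderiv ℝ (boost i U) z (Pi.single a 1) = _
  rw [hb.fderiv]
  simp only [ContinuousLinearMap.add_apply, ContinuousLinearMap.smul_apply,
    ContinuousLinearMap.comp_apply, ContinuousLinearMap.proj_apply,
    ContinuousLinearMap.apply_apply, smul_eq_mul, pd_pd hU]
  ring

lemma pd0_boost (hU : ContDiffAt ℝ 2 U z) (i : Fin 3) :
    pd 0 (boost i U) z = pd i.succ U z + z 0 * pd 0 (pd i.succ U) z
      + z i.succ * pd 0 (pd 0 U) z := by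
  have h := pd_boost hU i 0
  rw [Pi.single_eq_same, Pi.single_eq_of_ne (Fin.succ_ne_zero i)] at h
  rw [h]; ring

lemma pdsucc_boost (hU : ContDiffAt ℝ 2 U z) (i : Fin 3) :
    pd i.succ (boost i U) z = pd 0 U z + z 0 * pd i.succ (pd i.succ U) z
      + z i.succ * pd i.succ (pd 0 U) z := by
  have h := pd_boost hU i i.succ
  rw [Pi.single_eq_same, Pi.single_eq_of_ne (Fin.succ_ne_zero i).symm] at h
  rw [h]; ring

lemma keyE1 (hU : ContDiffAt ℝ 2 U z) :
    (z 0 ^ 2 - ∑ i : Fin 3, (z i.succ)^2) * pd 0 (pd 0 U) z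
      = z 0 ^ 2 * box U z
        + ∑ i : Fin 3, (z 0 * pd i.succ (boost i U) z - z i.succ * pd 0 (boost i U) z
            + z i.succ * pd i.succ U z)
        - 3 * (z 0 * pd 0 U z) := by
  simp only [box, lap, Fin.sum_univ_three]
  rw [pd0_boost hU 0, pd0_boost hU 1, pd0_boost hU 2,
    pdsucc_boost hU 0, pdsucc_boost hU 1, pdsucc_boost hU 2,
    pd_comm hU 0 (Fin.succ 0), pd_comm hU 0 (Fin.succ 1), pd_comm hU 0 (Fin.succ 2)]
  ring

lemma le_dGam (U : (Fin 4 → ℝ) → ℝ) (z : Fin 4 → ℝ) (a : Fin 4) (k : Fin 11) :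
    |pd a (gam k U) z| ≤ dGam U z := by
  rw [dGam, ← Real.sqrt_sq_eq_abs]
  apply Real.sqrt_le_sqrt
  calc (pd a (gam k U) z)^2
      ≤ ∑ k : Fin 11, (pd a (gam k U) z)^2 :=
        Finset.single_le_sum (f := fun k : Fin 11 => (pd a (gam k U) z)^2)
          (fun _ _ => sq_nonneg _) (Finset.mem_univ k)
    _ ≤ ∑ a : Fin 4, ∑ k : Fin 11, (pd a (gam k U) z)^2 :=
        Finset.single_le_sum (f := fun a : Fin 4 => ∑ k : Fin 11, (pd a (gam k U) z)^2)
          (fun _ _ => Finset.sum_nonneg fun _ _ => sq_nonneg _) (Finset.mem_univ a)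

lemma pd_le_dGam (U : (Fin 4 → ℝ) → ℝ) (z : Fin 4 → ℝ) (a : Fin 4) :
    |pd a U z| ≤ dGam U z := le_dGam U z a 0

lemma pd_boost_le_dGam (U : (Fin 4 → ℝ) → ℝ) (z : Fin 4 → ℝ) (a : Fin 4) (i : Fin 3) :
    |pd a (boost i U) z| ≤ dGam U z := by
  fin_cases i
  · exact le_dGam U z a 5
  · exact le_dGam U z a 6
  · exact le_dGam U z a 7

lemma abs_le_jb (s : ℝ) : |s| ≤ jb s := by
  rw [jb, ← Real.sqrt_sq_eq_abs]
  exact Real.sqrt_le_sqrt (by nlinarith)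

lemma jb_le (s : ℝ) (hs : 1 ≤ |s|) : jb s ≤ Real.sqrt 2 * |s| := by
  rw [jb, ← Real.sqrt_sq_eq_abs, ← Real.sqrt_mul (by norm_num)]
  apply Real.sqrt_le_sqrt
  nlinarith [sq_abs s, abs_nonneg s]

end Aux

/-- **Mixed second-derivative bound, interior case.** For `u` of class `C²` on
`(0,∞) × ℝ³` with `|t − r| ≥ 1` and `r ≤ 2t`:
`⟨t−r⟩|∂_i∂_t u| ≲ |∂Γ^{≤1}u| + ⟨t+r⟩|□u|` for each `i = 1,2,3`, absolute constant. -/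
theorem mixed_second_derivative_interior :
    ∃ C > 0, ∀ U : (Fin 4 → ℝ) → ℝ,
      ContDiffOn ℝ 2 U {z : Fin 4 → ℝ | 0 < z 0} →
      ∀ z : Fin 4 → ℝ, 0 < z 0 → 1 ≤ |z 0 - rad z| → rad z ≤ 2 * z 0 →
        ∀ i : Fin 3,
          jb (z 0 - rad z) * |pd i.succ (pd 0 U) z|
            ≤ C * (dGam U z + jb (z 0 + rad z) * |box U z|) := by
  refine ⟨25, by norm_num, ?_⟩
  intro U hU z hz h1 h2 i
  have hopen : IsOpen {z : Fin 4 → ℝ | 0 < z 0} :=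
    isOpen_lt continuous_const (continuous_apply 0)
  have hU2 : ContDiffAt ℝ 2 U z := hU.contDiffAt (hopen.mem_nhds hz)
  set t := z 0 with ht_def
  set r := rad z with hr_def
  set D := dGam U z with hD_def
  set B := |box U z| with hB_def
  set P := |pd 0 (pd 0 U) z| with hP_def
  set Q := |pd i.succ (pd 0 U) z| with hQ_def
  have hr0 : 0 ≤ r := Real.sqrt_nonneg _
  have hD0 : 0 ≤ D := Real.sqrt_nonneg _
  have hB0 : 0 ≤ B := abs_nonneg _
  have hP0 : 0 ≤ P := abs_nonneg _
  have hQ0 : 0 ≤ Q := abs_nonneg _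
  have hr2 : r ^ 2 = ∑ j : Fin 3, (z j.succ)^2 := Real.sq_sqrt (by positivity)
  have hxr : ∀ j : Fin 3, |z j.succ| ≤ r := by
    intro j
    rw [hr_def, rad, ← Real.sqrt_sq_eq_abs]
    exact Real.sqrt_le_sqrt
      (Finset.single_le_sum (f := fun j : Fin 3 => (z j.succ)^2)
        (fun _ _ => sq_nonneg _) (Finset.mem_univ j))
  -- Step A: |t-r| * ((t+r) * P) ≤ t^2*B + 6*(t+r)*D
  have hA : |t - r| * ((t + r) * P) ≤ t^2 * B + 6 * (t + r) * D := by
    have e1 : |t - r| * ((t + r) * P) = |(t^2 - ∑ j : Fin 3, (z j.succ)^2) * pd 0 (pd 0 U) z| := by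
      rw [abs_mul, ← hr2]
      have : |t^2 - r^2| = |t - r| * (t + r) := by
        have : t^2 - r^2 = (t - r) * (t + r) := by ring
        rw [this, abs_mul, abs_of_pos (by linarith : (0:ℝ) < t + r)]
      rw [this]; ring
    rw [e1, keyE1 hU2, Fin.sum_univ_three]
    have hb1 : ∀ j : Fin 3, |t * pd j.succ (boost j U) z| ≤ t * D := by
      intro j
      rw [abs_mul, abs_of_pos hz]
      exact mul_le_mul_of_nonneg_left (pd_boost_le_dGam U z j.succ j) hz.le
    have hb2 : ∀ j : Fin 3, |z j.succ * pd 0 (boost j U) z| ≤ r * D := by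
      intro j
      rw [abs_mul]
      exact mul_le_mul (hxr j) (pd_boost_le_dGam U z 0 j) (abs_nonneg _) hr0
    have hb3 : ∀ j : Fin 3, |z j.succ * pd j.succ U z| ≤ r * D := by
      intro j
      rw [abs_mul]
      exact mul_le_mul (hxr j) (pd_le_dGam U z j.succ) (abs_nonneg _) hr0
    have hb4 : |t * pd 0 U z| ≤ t * D := by
      rw [abs_mul, abs_of_pos hz]
      exact mul_le_mul_of_nonneg_left (pd_le_dGam U z 0) hz.le
    have hbox : |t^2 * box U z| = t^2 * B := by
      rw [abs_mul, abs_of_nonneg (sq_nonneg t)]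
    obtain ⟨c10, c11⟩ := abs_le.mp (hb1 0)
    obtain ⟨c20, c21⟩ := abs_le.mp (hb1 1)
    obtain ⟨c30, c31⟩ := abs_le.mp (hb1 2)
    obtain ⟨d10, d11⟩ := abs_le.mp (hb2 0)
    obtain ⟨d20, d21⟩ := abs_le.mp (hb2 1)
    obtain ⟨d30, d31⟩ := abs_le.mp (hb2 2)
    obtain ⟨e10, e11⟩ := abs_le.mp (hb3 0)
    obtain ⟨e20, e21⟩ := abs_le.mp (hb3 1)
    obtain ⟨e30, e31⟩ := abs_le.mp (hb3 2)
    obtain ⟨f10, f11⟩ := abs_le.mp hb4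
    obtain ⟨g10, g11⟩ := abs_le.mp (le_of_eq hbox)
    rw [abs_le]
    constructor <;> linarith
  -- divide out (t+r)
  have hPP : |t - r| * P ≤ t * B + 6 * D := by
    have htr : (0:ℝ) < t + r := by linarith
    rw [← mul_le_mul_iff_right₀ htr]
    have htrB : 0 ≤ t * r * B := by positivity
    nlinarith [hA]
  -- Step B: t * Q ≤ 2*D + r*P
  have hQB : t * Q ≤ 2 * D + r * P := by
    have he : t * pd i.succ (pd 0 U) z
        = pd 0 (boost i U) z - pd i.succ U z - z i.succ * pd 0 (pd 0 U) z := by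
      linear_combination -(pd0_boost hU2 i) - t * (pd_comm hU2 0 i.succ)
    have h1' : |pd 0 (boost i U) z| ≤ D := pd_boost_le_dGam U z 0 i
    have h2' : |pd i.succ U z| ≤ D := pd_le_dGam U z i.succ
    have h3' : |z i.succ * pd 0 (pd 0 U) z| ≤ r * P := by
      rw [abs_mul]
      exact mul_le_mul_of_nonneg_right (hxr i) hP0
    obtain ⟨a0, a1⟩ := abs_le.mp h1'
    obtain ⟨b0, b1⟩ := abs_le.mp h2'
    obtain ⟨c0, c1⟩ := abs_le.mp h3'
    have : t * Q = |t * pd i.succ (pd 0 U) z| := by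
      rw [abs_mul, abs_of_pos hz]
    rw [this, he, abs_le]
    constructor <;> linarith
  -- final combination
  have hm : |t - r| ≤ t := abs_le.mpr ⟨by linarith, by linarith⟩
  have hj1 : jb (t - r) ≤ Real.sqrt 2 * |t - r| := jb_le _ h1
  have hj2 : t + r ≤ jb (t + r) := by
    have := abs_le_jb (t + r)
    rwa [abs_of_nonneg (by linarith)] at this
  have hs2 : Real.sqrt 2 ≤ 3/2 := by
    nlinarith [Real.sq_sqrt (by norm_num : (0:ℝ) ≤ 2), Real.sqrt_nonneg 2]
  have hs20 : (0:ℝ) ≤ Real.sqrt 2 := Real.sqrt_nonneg 2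
  have hjb2 : (0:ℝ) ≤ jb (t + r) := Real.sqrt_nonneg _
  have key : t * (jb (t - r) * Q) ≤ t * (25 * (D + jb (t + r) * B)) := by
    have c1 : t * (jb (t - r) * Q) ≤ Real.sqrt 2 * (|t - r| * (t * Q)) := by
      have : jb (t - r) * Q ≤ (Real.sqrt 2 * |t - r|) * Q :=
        mul_le_mul_of_nonneg_right hj1 hQ0
      nlinarith [mul_le_mul_of_nonneg_left this hz.le]
    have c2 : |t - r| * (t * Q) ≤ |t - r| * (2 * D + r * P) :=
      mul_le_mul_of_nonneg_left hQB (abs_nonneg _)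
    have c3 : |t - r| * D ≤ t * D := mul_le_mul_of_nonneg_right hm hD0
    have c4 : r * (|t - r| * P) ≤ (2 * t) * (t * B + 6 * D) := by
      apply mul_le_mul h2 hPP (mul_nonneg (abs_nonneg _) hP0) (by linarith)
    have c5 : t * (t * B) ≤ t * (jb (t + r) * B) := by
      apply mul_le_mul_of_nonneg_left _ hz.le
      exact mul_le_mul_of_nonneg_right (le_trans (by linarith) hj2) hB0
    nlinarith [mul_le_mul_of_nonneg_left c2 hs20, mul_le_mul_of_nonneg_left c3 hs20,
      mul_le_mul_of_nonneg_left c4 hs20, mul_le_mul_of_nonneg_left c5 hs20,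
      mul_le_mul_of_nonneg_right hs2 (mul_nonneg hz.le hD0),
      mul_le_mul_of_nonneg_right hs2 (mul_nonneg hz.le (mul_nonneg hjb2 hB0)),
      mul_nonneg hz.le hD0, mul_nonneg hz.le (mul_nonneg hjb2 hB0)]
  exact le_of_mul_le_mul_left key hz
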